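/- Let T ⊆ ℝ² be a countable set with T ∩ {p₁, p₂, p₃, p₄} = ∅. Then there exists t ∈ [−1/8, 1/8] such that G_t ∩ T = ∅. -/

import Mathlib

open Metric Set

/-- The point `(x, y)` of the Euclidean plane. -/
noncomputable def pt2 (x y : ℝ) : EuclideanSpace ℝ (Fin 2) :=
  (WithLp.equiv 2 (Fin 2 → ℝ)).symm ![x, y]

/-- The closed unit disc with three open discs of radius `1/4` removed. -/
noncomputable def Qregion : Set (EuclideanSpace ℝ (Fin 2)) :=
  Metric.closedBall (pt2 0 0) 1 \
    (Metric.ball (pt2 (-(1/2)) 0) (1/4) ∪ Metric.ball (pt2 0 (1/2)) (1/4) ∪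
      Metric.ball (pt2 0 (-(1/2))) (1/4))

noncomputable def p1 : EuclideanSpace ℝ (Fin 2) := pt2 (-(1/4)) 0
noncomputable def p2 : EuclideanSpace ℝ (Fin 2) := pt2 0 (1/4)
noncomputable def p3 : EuclideanSpace ℝ (Fin 2) := pt2 0 (-(1/4))
noncomputable def p4 : EuclideanSpace ℝ (Fin 2) := pt2 1 0

/-- The union of the four closed segments from `(t, -t)` to `p₁, p₂, p₃, p₄`. -/
noncomputable def Gt (t : ℝ) : Set (EuclideanSpace ℝ (Fin 2)) :=
  segment ℝ (pt2 t (-t)) p1 ∪ segment ℝ (pt2 t (-t)) p2 ∪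
    segment ℝ (pt2 t (-t)) p3 ∪ segment ℝ (pt2 t (-t)) p4

/-- The unique `t` for which `x` can lie on the segment from `(t,-t)` to `(q0,q1)`. -/
noncomputable def tv (q0 q1 : ℝ) (x : EuclideanSpace ℝ (Fin 2)) : ℝ :=
  (x 0 - ((x 0 + x 1)/(q0+q1)) * q0)/(1 - (x 0 + x 1)/(q0+q1))

lemma seg_unique (q0 q1 : ℝ) (hq : q0 + q1 ≠ 0) (x : EuclideanSpace ℝ (Fin 2))
    (hx : x ≠ pt2 q0 q1) (t : ℝ) (h : x ∈ segment ℝ (pt2 t (-t)) (pt2 q0 q1)) :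
    t = tv q0 q1 x := by
  obtain ⟨a, b, ha, hb, hab, heq⟩ := h
  have h0 : a*t + b*q0 = x 0 := by
    simpa [pt2, PiLp.add_apply, PiLp.smul_apply, smul_eq_mul] using congrArg (fun v => v 0) heq
  have h1 : a*(-t) + b*q1 = x 1 := by
    simpa [pt2, PiLp.add_apply, PiLp.smul_apply, smul_eq_mul] using congrArg (fun v => v 1) heq
  have hbs : b = (x 0 + x 1)/(q0+q1) := by
    field_simp
    linarith
  have hane : a ≠ 0 := by
    intro h0a
    have hb1 : b = 1 := by linarith
    rw [h0a, hb1] at h0 h1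
    norm_num at h0 h1
    apply hx
    ext i
    fin_cases i <;> simp [pt2] <;> linarith
  rw [tv, ← hbs, show (1:ℝ) - b = a by linarith]
  field_simp
  linarith

/-- The set of bad parameters for a point `x`. -/
noncomputable def badSet (x : EuclideanSpace ℝ (Fin 2)) : Set ℝ :=
  {tv (-(1/4)) 0 x, tv 0 (1/4) x, tv 0 (-(1/4)) x, tv 1 0 x}

lemma mem_badSet {x : EuclideanSpace ℝ (Fin 2)} {t : ℝ}
    (h1 : x ≠ p1) (h2 : x ≠ p2) (h3 : x ≠ p3) (h4 : x ≠ p4)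
    (hx : x ∈ Gt t) : t ∈ badSet x := by
  rcases hx with ((hs | hs) | hs) | hs
  · exact Or.inl (seg_unique _ _ (by norm_num) x h1 t hs)
  · exact Or.inr (Or.inl (seg_unique _ _ (by norm_num) x h2 t hs))
  · exact Or.inr (Or.inr (Or.inl (seg_unique _ _ (by norm_num) x h3 t hs)))
  · exact Or.inr (Or.inr (Or.inr (seg_unique _ _ (by norm_num) x h4 t hs)))

theorem stmt6 (T : Set (EuclideanSpace ℝ (Fin 2)))
    (hT : T.Countable) (hTp : T ∩ {p1, p2, p3, p4} = ∅) :
    ∃ t ∈ Set.Icc (-(1/8) : ℝ) (1/8), Gt t ∩ T = ∅ := by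
  set B : Set ℝ := ⋃ x ∈ T, badSet x with hB
  have hBc : B.Countable := by
    apply hT.biUnion
    intro x _
    exact ((Set.finite_singleton _).insert _ |>.insert _ |>.insert _).countable
  have hvol : MeasureTheory.volume B = 0 := hBc.measure_zero _
  have hnot : ¬ (Set.Icc (-(1/8) : ℝ) (1/8) ⊆ B) := by
    intro hsub
    have := MeasureTheory.measure_mono (μ := MeasureTheory.volume) hsub
    rw [hvol, Real.volume_Icc] at this
    simp at this
    norm_num at this
  obtain ⟨t, htI, htB⟩ := Set.not_subset.mp hnot
  refine ⟨t, htI, ?_⟩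
  by_contra hne
  obtain ⟨x, hxG, hxT⟩ := Set.nonempty_iff_ne_empty.mpr hne
  have hxnp : x ∉ ({p1, p2, p3, p4} : Set (EuclideanSpace ℝ (Fin 2))) := by
    intro hmem
    exact absurd (Set.mem_inter hxT hmem) (by rw [hTp]; exact notMem_empty x)
  simp only [Set.mem_insert_iff, Set.mem_singleton_iff, not_or] at hxnp
  obtain ⟨h1, h2, h3, h4⟩ := hxnp
  exact htB (Set.mem_biUnion hxT (mem_badSet h1 h2 h3 h4 hxG))
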